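/- For finite sets A₁,…,Aₙ ⊂ ℝ, the fourth root of the additive energy is subadditive under union: (E⁺(⋃ᵢ Aᵢ))^{1/4} ≤ Σᵢ (E⁺(Aᵢ))^{1/4}. -/

import Mathlib

open Finset
noncomputable section

def mulE (A B : Finset ℝ) : ℕ :=
  ((A ×ˢ B ×ˢ A ×ˢ B).filter fun q => q.1 * q.2.1 = q.2.2.1 * q.2.2.2).card

def addE (A B : Finset ℝ) : ℕ :=
  ((A ×ˢ B ×ˢ A ×ˢ B).filter fun q => q.1 + q.2.1 = q.2.2.1 + q.2.2.2).card

def quot (A B : Finset ℝ) : Finset ℝ := (A ×ˢ B).image fun p => p.1 / p.2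

def prodSet (A B : Finset ℝ) : Finset ℝ := (A ×ˢ B).image fun p => p.1 * p.2

def dil (l : ℝ) (A : Finset ℝ) : Finset ℝ := A.image fun a => l * a

/-- `x • R⁻¹ = {x / r : r ∈ R}` -/
def dilInv (x : ℝ) (R : Finset ℝ) : Finset ℝ := R.image fun r => x / r

/-- `x ∈ Sym^×_t(Q,R)` iff `|Q ∩ x R⁻¹| ≥ t`. -/
def symCond (t : ℝ) (Q R : Finset ℝ) (x : ℝ) : Prop :=
  t ≤ ((Q ∩ dilInv x R).card : ℝ)


lemma addE_eq_energy (A B : Finset ℝ) : addE A B = Finset.addEnergy A B := by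
  rw [Finset.addEnergy_eq_card_filter, addE]
  refine Finset.card_equiv (Equiv.prodAssoc ℝ ℝ (ℝ × ℝ)).symm ?_
  rintro ⟨a, b, c, d⟩
  simp [and_assoc, eq_comm]

-- Cauchy-Schwarz real
lemma cs2 {κ : Type*} (K : Finset κ) (f g : κ → ℝ) :
    ∑ s ∈ K, f s * g s ≤ Real.sqrt (∑ s ∈ K, f s ^ 2) * Real.sqrt (∑ s ∈ K, g s ^ 2) := by
  calc ∑ s ∈ K, f s * g s ≤ |∑ s ∈ K, f s * g s| := le_abs_self _
    _ = Real.sqrt ((∑ s ∈ K, f s * g s) ^ 2) := (Real.sqrt_sq_eq_abs _).symm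
    _ ≤ Real.sqrt ((∑ s ∈ K, f s ^ 2) * (∑ s ∈ K, g s ^ 2)) :=
        Real.sqrt_le_sqrt (Finset.sum_mul_sq_le_sq_mul_sq K f g)
    _ = _ := Real.sqrt_mul (Finset.sum_nonneg fun s _ => sq_nonneg _) _

lemma minkowski2 {κ : Type*} (K : Finset κ) (f g : κ → ℝ) :
    Real.sqrt (∑ s ∈ K, (f s + g s) ^ 2) ≤
      Real.sqrt (∑ s ∈ K, f s ^ 2) + Real.sqrt (∑ s ∈ K, g s ^ 2) := by
  have hf : (0:ℝ) ≤ ∑ s ∈ K, f s ^ 2 := Finset.sum_nonneg fun s _ => sq_nonneg _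
  have hg : (0:ℝ) ≤ ∑ s ∈ K, g s ^ 2 := Finset.sum_nonneg fun s _ => sq_nonneg _
  rw [show (Real.sqrt (∑ s ∈ K, f s ^ 2) + Real.sqrt (∑ s ∈ K, g s ^ 2)) =
      Real.sqrt ((Real.sqrt (∑ s ∈ K, f s ^ 2) + Real.sqrt (∑ s ∈ K, g s ^ 2)) ^ 2) from
      (Real.sqrt_sq (by positivity)).symm]
  apply Real.sqrt_le_sqrt
  have := cs2 K f g
  calc ∑ s ∈ K, (f s + g s) ^ 2
      = ∑ s ∈ K, f s ^ 2 + 2 * ∑ s ∈ K, f s * g s + ∑ s ∈ K, g s ^ 2 := by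
        rw [Finset.mul_sum, ← Finset.sum_add_distrib, ← Finset.sum_add_distrib]
        apply Finset.sum_congr rfl; intro s _; ring
    _ ≤ _ := by
        rw [add_sq, Real.sq_sqrt hf, Real.sq_sqrt hg]
        nlinarith [this]

lemma minkowski_sum {ι κ : Type*} (I : Finset ι) (K : Finset κ) (f : ι → κ → ℝ) :
    Real.sqrt (∑ s ∈ K, (∑ i ∈ I, f i s) ^ 2) ≤
      ∑ i ∈ I, Real.sqrt (∑ s ∈ K, f i s ^ 2) := by
  induction I using Finset.cons_induction with
  | empty => simp
  | cons a I ha ih =>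
    simp only [Finset.sum_cons]
    calc Real.sqrt (∑ s ∈ K, (f a s + ∑ i ∈ I, f i s) ^ 2)
        ≤ Real.sqrt (∑ s ∈ K, f a s ^ 2) + Real.sqrt (∑ s ∈ K, (∑ i ∈ I, f i s) ^ 2) :=
          minkowski2 K _ _
      _ ≤ _ := by gcongr

open scoped Pointwise

def rcnt (A B : Finset ℝ) (s : ℝ) : ℕ := ((A ×ˢ B).filter fun p => p.1 + p.2 = s).card
def dcnt (A : Finset ℝ) (e : ℝ) : ℕ := ((A ×ˢ A).filter fun p => p.1 - p.2 = e).card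

lemma rcnt_eq_zero {A B : Finset ℝ} {s : ℝ} (h : s ∉ A + B) : rcnt A B s = 0 := by
  rw [rcnt, Finset.card_eq_zero, Finset.filter_eq_empty_iff]
  rintro ⟨a, b⟩ hab heq
  rw [Finset.mem_product] at hab
  exact h (heq ▸ Finset.add_mem_add hab.1 hab.2)

lemma addE_eq_sum_sq (A B K : Finset ℝ) (hK : A + B ⊆ K) :
    addE A B = ∑ s ∈ K, (rcnt A B s) ^ 2 := by
  rw [addE_eq_energy, Finset.addEnergy_eq_sum_sq']
  have hr : ∀ s : ℝ, ((A ×ˢ B).filter fun (x, y) => x + y = s).card = rcnt A B s :=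
    fun s => rfl
  simp only [hr]
  exact Finset.sum_subset hK (fun s _ hs => by rw [rcnt_eq_zero hs]; simp)

lemma rcnt_union_le (n : ℕ) (A : Fin n → Finset ℝ) (s : ℝ) :
    rcnt (Finset.univ.biUnion A) (Finset.univ.biUnion A) s ≤
      ∑ p : Fin n × Fin n, rcnt (A p.1) (A p.2) s := by
  rw [rcnt]
  calc ((Finset.univ.biUnion A ×ˢ Finset.univ.biUnion A).filter fun p => p.1 + p.2 = s).card
      ≤ ((Finset.univ : Finset (Fin n × Fin n)).biUnion fun ij =>
          (A ij.1 ×ˢ A ij.2).filter fun p => p.1 + p.2 = s).card := by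
        apply Finset.card_le_card
        rintro ⟨a, b⟩ hab
        rw [Finset.mem_filter, Finset.mem_product] at hab
        obtain ⟨⟨ha, hb⟩, heq⟩ := hab
        rw [Finset.mem_biUnion] at ha hb
        obtain ⟨i, -, hi⟩ := ha
        obtain ⟨j, -, hj⟩ := hb
        rw [Finset.mem_biUnion]
        exact ⟨(i, j), Finset.mem_univ _, by
          rw [Finset.mem_filter, Finset.mem_product]; exact ⟨⟨hi, hj⟩, heq⟩⟩
    _ ≤ ∑ p : Fin n × Fin n, rcnt (A p.1) (A p.2) s := Finset.card_biUnion_le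

lemma dcnt_eq_zero {A : Finset ℝ} {e : ℝ} (h : e ∉ A - A) : dcnt A e = 0 := by
  rw [dcnt, Finset.card_eq_zero, Finset.filter_eq_empty_iff]
  rintro ⟨a, b⟩ hab heq
  rw [Finset.mem_product] at hab
  exact h (heq ▸ Finset.sub_mem_sub hab.1 hab.2)

lemma addE_eq_sum_mul (A B D : Finset ℝ) (hD : A - A ⊆ D) :
    addE A B = ∑ e ∈ D, dcnt A e * dcnt B e := by
  have core : addE A B = ∑ e ∈ A - A, dcnt A e * dcnt B e := by
    simp only [dcnt, ← Finset.card_product]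
    rw [← Finset.card_sigma, addE]
    refine Finset.card_nbij' (fun q => ⟨q.1 - q.2.2.1, ((q.1, q.2.2.1), (q.2.2.2, q.2.1))⟩)
      (fun p => (p.2.1.1, p.2.2.2, p.2.1.2, p.2.2.1)) ?_ ?_ ?_ ?_
    · rintro ⟨a, b, c, d⟩ hq
      simp only [Finset.mem_coe, Finset.mem_filter, Finset.mem_product] at hq
      obtain ⟨⟨ha, hb, hc, hd⟩, heq⟩ := hq
      simp only [Finset.mem_coe, Finset.mem_sigma, Finset.mem_product, Finset.mem_filter]
      refine ⟨Finset.sub_mem_sub ha hc, ⟨⟨ha, hc⟩, ?_⟩, ⟨⟨hd, hb⟩, ?_⟩⟩ <;> first | trivial | linarith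
    · rintro ⟨e, ⟨a, c⟩, d, b⟩ hp
      simp only [Finset.mem_coe, Finset.mem_sigma, Finset.mem_product, Finset.mem_filter] at hp
      obtain ⟨-, ⟨⟨ha, hc⟩, h1⟩, ⟨hd, hb⟩, h2⟩ := hp
      simp only [Finset.mem_coe, Finset.mem_filter, Finset.mem_product]
      exact ⟨⟨ha, hb, hc, hd⟩, by linarith⟩
    · rintro ⟨a, b, c, d⟩ -; rfl
    · rintro ⟨e, ⟨a, c⟩, d, b⟩ hp
      simp only [Finset.mem_coe, Finset.mem_sigma, Finset.mem_product, Finset.mem_filter] at hp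
      obtain ⟨-, ⟨-, h1⟩, -, -⟩ := hp
      simp [h1]
  rw [core]
  exact Finset.sum_subset hD (fun e _ he => by rw [dcnt_eq_zero he, zero_mul])

lemma addE_mul_le (A B : Finset ℝ) :
    (addE A B : ℝ) ≤ Real.sqrt (addE A A) * Real.sqrt (addE B B) := by
  set D := (A - A) ∪ (B - B) with hDdef
  have hA : A - A ⊆ D := Finset.subset_union_left
  have hB : B - B ⊆ D := Finset.subset_union_right
  have h2 : (addE A A : ℝ) = ∑ e ∈ D, (dcnt A e : ℝ) ^ 2 := by
    rw [addE_eq_sum_mul A A D hA]; push_cast; apply Finset.sum_congr rfl; intros; ring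
  have h3 : (addE B B : ℝ) = ∑ e ∈ D, (dcnt B e : ℝ) ^ 2 := by
    rw [addE_eq_sum_mul B B D hB]; push_cast; apply Finset.sum_congr rfl; intros; ring
  have h1 : (addE A B : ℝ) = ∑ e ∈ D, (dcnt A e : ℝ) * (dcnt B e : ℝ) := by
    rw [addE_eq_sum_mul A B D hA]; push_cast; rfl
  rw [h1, h2, h3]
  exact cs2 D _ _

lemma rpow_quarter (x : ℝ) (hx : 0 ≤ x) :
    x ^ ((1:ℝ)/4) = Real.sqrt (Real.sqrt x) := by
  rw [Real.sqrt_eq_rpow, Real.sqrt_eq_rpow, ← Real.rpow_mul hx]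
  norm_num

theorem stmt4 (n : ℕ) (A : Fin n → Finset ℝ) :
    ((addE (Finset.univ.biUnion A) (Finset.univ.biUnion A) : ℝ)) ^ ((1:ℝ)/4) ≤
      ∑ i : Fin n, ((addE (A i) (A i) : ℝ)) ^ ((1:ℝ)/4) := by
  set U := Finset.univ.biUnion A with hU
  set K := U + U with hK
  set S := ∑ i : Fin n, ((addE (A i) (A i) : ℝ)) ^ ((1:ℝ)/4) with hS
  have hS0 : 0 ≤ S := Finset.sum_nonneg fun i _ =>
    Real.rpow_nonneg (Nat.cast_nonneg _) _
  have key : Real.sqrt (addE U U) ≤ S ^ 2 := by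
    have e1 : (addE U U : ℝ) = ∑ s ∈ K, (rcnt U U s : ℝ) ^ 2 := by
      rw [addE_eq_sum_sq U U K Finset.Subset.rfl]; push_cast; rfl
    calc Real.sqrt (addE U U)
        ≤ Real.sqrt (∑ s ∈ K, (∑ p : Fin n × Fin n, (rcnt (A p.1) (A p.2) s : ℝ)) ^ 2) := by
          rw [e1]
          apply Real.sqrt_le_sqrt
          apply Finset.sum_le_sum
          intro s _
          have := rcnt_union_le n A s
          have hcast : (rcnt U U s : ℝ) ≤ ∑ p : Fin n × Fin n, (rcnt (A p.1) (A p.2) s : ℝ) := by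
            push_cast; exact_mod_cast this
          exact pow_le_pow_left₀ (Nat.cast_nonneg _) hcast 2
      _ ≤ ∑ p : Fin n × Fin n, Real.sqrt (∑ s ∈ K, (rcnt (A p.1) (A p.2) s : ℝ) ^ 2) :=
          minkowski_sum Finset.univ K _
      _ = ∑ p : Fin n × Fin n, Real.sqrt (addE (A p.1) (A p.2)) := by
          apply Finset.sum_congr rfl
          intro p _
          congr 1
          have hsub : A p.1 + A p.2 ⊆ K := by
            apply Finset.add_subset_add <;>
              exact Finset.subset_biUnion_of_mem A (Finset.mem_univ _)
          rw [addE_eq_sum_sq (A p.1) (A p.2) K hsub]; push_cast; rfl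
      _ ≤ ∑ p : Fin n × Fin n, ((addE (A p.1) (A p.1) : ℝ)) ^ ((1:ℝ)/4) *
            ((addE (A p.2) (A p.2) : ℝ)) ^ ((1:ℝ)/4) := by
          apply Finset.sum_le_sum
          intro p _
          rw [rpow_quarter _ (Nat.cast_nonneg _), rpow_quarter _ (Nat.cast_nonneg _),
            ← Real.sqrt_mul (Real.sqrt_nonneg _)]
          exact Real.sqrt_le_sqrt (addE_mul_le _ _)
      _ = S ^ 2 := by
          rw [sq, Finset.sum_mul_sum]; exact Fintype.sum_prod_type _
  calc ((addE U U : ℝ)) ^ ((1:ℝ)/4)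
      = Real.sqrt (Real.sqrt (addE U U)) := rpow_quarter _ (Nat.cast_nonneg _)
    _ ≤ Real.sqrt (S ^ 2) := Real.sqrt_le_sqrt key
    _ = S := Real.sqrt_sq hS0
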